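/- Let m = 1. For every ρ̃ ∈ ℝ and every x ∈ {0,1}, the product D_t(B(s,ρ,x),ρ) · B_ρ(s,ρ,x) tends to 0 as (s,ρ) → (0⁺,ρ̃), where D_t denotes the partial derivative of D in t and B_ρ the partial derivative of B in ρ. Consequently, the function (s,ρ,x) ↦ D_t(B(s,ρ,x),ρ)·B_ρ(s,ρ,x), defined for s ∈ (0,1), extends continuously to s = 0 with value 0. -/

import Mathlib

open MeasureTheory Real Filter Set

noncomputable section

/-- m = 1: μ(ρ) = e^ρ/(1+e^ρ). -/
def mu1 (ρ : ℝ) : ℝ := Real.exp ρ / (1 + Real.exp ρ)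

/-- m = 1: b(λ,ρ) = λ log λ + (1−λ) log(1−λ) − λρ + log(1+e^ρ).
Note `Real.log 0 = 0`, so the convention 0·log 0 = 0 holds. -/
def b1 (l ρ : ℝ) : ℝ :=
  l * Real.log l + (1 - l) * Real.log (1 - l) - l * ρ + Real.log (1 + Real.exp ρ)

/-- m = 1: B(s,ρ,x) = b((1−s)μ(ρ) + s x, ρ). -/
def B1 (s ρ x : ℝ) : ℝ := b1 ((1 - s) * mu1 ρ + s * x) ρ

/-- m = 1: D(t,ρ) = vol({λ ∈ [0,1] : b(λ,ρ) ≤ t}). -/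
def D1 (t ρ : ℝ) : ℝ := (volume {l ∈ Set.Icc (0 : ℝ) 1 | b1 l ρ ≤ t}).toReal

lemma one_add_exp_pos (ρ : ℝ) : 0 < 1 + Real.exp ρ := by positivity

lemma mu1_pos (ρ : ℝ) : 0 < mu1 ρ := div_pos (Real.exp_pos ρ) (one_add_exp_pos ρ)

lemma mu1_lt_one (ρ : ℝ) : mu1 ρ < 1 := by
  rw [mu1, div_lt_one (one_add_exp_pos ρ)]; linarith

lemma one_sub_mu1 (ρ : ℝ) : 1 - mu1 ρ = 1 / (1 + Real.exp ρ) := by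
  rw [mu1]; field_simp; ring

lemma log_mu1 (ρ : ℝ) : Real.log (mu1 ρ) = ρ - Real.log (1 + Real.exp ρ) := by
  rw [mu1, Real.log_div (Real.exp_ne_zero ρ) (ne_of_gt (one_add_exp_pos ρ)), Real.log_exp]

lemma log_one_sub_mu1 (ρ : ℝ) : Real.log (1 - mu1 ρ) = - Real.log (1 + Real.exp ρ) := by
  rw [one_sub_mu1, Real.log_div one_ne_zero (ne_of_gt (one_add_exp_pos ρ)), Real.log_one]; ring

lemma b1_mu1 (ρ : ℝ) : b1 (mu1 ρ) ρ = 0 := by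
  rw [b1, log_mu1, log_one_sub_mu1]; ring

lemma continuous_b1 (ρ : ℝ) : Continuous (fun l => b1 l ρ) := by
  unfold b1
  have h1 : Continuous fun l : ℝ => l * Real.log l := Real.continuous_mul_log
  have h2 : Continuous fun l : ℝ => (1 - l) * Real.log (1 - l) :=
    Real.continuous_mul_log.comp (continuous_const.sub continuous_id)
  continuity

lemma hasDerivAt_b1 (ρ : ℝ) {l : ℝ} (h0 : l ≠ 0) (h1 : l ≠ 1) :
    HasDerivAt (fun l => b1 l ρ) (Real.log l - Real.log (1 - l) - ρ) l := by
  have e1 : HasDerivAt (fun l : ℝ => l * Real.log l) (Real.log l + 1) l :=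
    Real.hasDerivAt_mul_log h0
  have e2 : HasDerivAt (fun l : ℝ => (1 - l) * Real.log (1 - l))
      ((Real.log (1 - l) + 1) * (-1)) l := by
    have := (Real.hasDerivAt_mul_log (x := 1 - l) (by intro h; apply h1; linarith)).comp l
      ((hasDerivAt_const l (1:ℝ)).sub (hasDerivAt_id l))
    simpa [Function.comp_def] using this
  have e3 : HasDerivAt (fun l : ℝ => l * ρ) ρ l := by
    simpa using (hasDerivAt_id l).mul_const ρ
  have := ((e1.add e2).sub e3).add_const (Real.log (1 + Real.exp ρ))
  exact this.congr_deriv (by ring)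

/-- The logit function is monotone on (0,1). -/
lemma logit_monoOn : MonotoneOn (fun l : ℝ => Real.log l - Real.log (1 - l)) (Ioo 0 1) := by
  intro a ha b hb hab
  have h1 : Real.log a ≤ Real.log b := Real.log_le_log ha.1 hab
  have h2 : Real.log (1 - b) ≤ Real.log (1 - a) :=
    Real.log_le_log (by linarith [hb.2]) (by linarith)
  dsimp only
  linarith

lemma logit_at_mu1 (ρ : ℝ) : Real.log (mu1 ρ) - Real.log (1 - mu1 ρ) = ρ := by
  rw [log_mu1, log_one_sub_mu1]; ring

lemma convexOn_b1 (ρ : ℝ) : ConvexOn ℝ (Icc 0 1) (fun l => b1 l ρ) := by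
  apply MonotoneOn.convexOn_of_deriv (convex_Icc 0 1) (continuous_b1 ρ).continuousOn
  · rw [interior_Icc]
    intro l hl
    exact (hasDerivAt_b1 ρ (ne_of_gt hl.1) (ne_of_lt hl.2)).differentiableAt.differentiableWithinAt
  · rw [interior_Icc]
    intro a ha b hb hab
    rw [(hasDerivAt_b1 ρ (ne_of_gt ha.1) (ne_of_lt ha.2)).deriv,
        (hasDerivAt_b1 ρ (ne_of_gt hb.1) (ne_of_lt hb.2)).deriv]
    have := logit_monoOn ha hb hab
    dsimp only at this
    linarith

/-- derivative of the gap function g = b1 - 2(l-c)^2 -/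
lemma hasDerivAt_g (ρ : ℝ) {l : ℝ} (h0 : l ≠ 0) (h1 : l ≠ 1) :
    HasDerivAt (fun l => b1 l ρ - 2 * (l - mu1 ρ)^2)
      (Real.log l - Real.log (1 - l) - ρ - 4 * (l - mu1 ρ)) l := by
  have e1 := hasDerivAt_b1 ρ h0 h1
  have e2 : HasDerivAt (fun l : ℝ => 2 * (l - mu1 ρ)^2) (4 * (l - mu1 ρ)) l := by
    have : HasDerivAt (fun l : ℝ => l - mu1 ρ) 1 l := (hasDerivAt_id l).sub_const _
    have := (this.pow 2).const_mul (2:ℝ)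
    exact this.congr_deriv (by ring)
  exact e1.sub e2

lemma hasDerivAt_G (ρ c : ℝ) {y : ℝ} (hy : y ∈ Ioo (0:ℝ) 1) :
    HasDerivAt (fun y : ℝ => Real.log y - Real.log (1 - y) - ρ - 4 * (y - c))
      (y⁻¹ + (1-y)⁻¹ - 4) y := by
  have e1 := Real.hasDerivAt_log (ne_of_gt hy.1)
  have e2 : HasDerivAt (fun y : ℝ => Real.log (1 - y)) (-(1-y)⁻¹) y := by
    have := (Real.hasDerivAt_log (x := 1 - y) (by intro h; nlinarith [hy.2])).comp y
      ((hasDerivAt_const y (1:ℝ)).sub (hasDerivAt_id y))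
    simpa [Function.comp_def] using this
  have e3 : HasDerivAt (fun y : ℝ => 4 * (y - c)) 4 y := by
    simpa using ((hasDerivAt_id y).sub_const c).const_mul (4:ℝ)
  have := ((e1.sub e2).sub_const ρ).sub e3
  exact this.congr_deriv (by ring)

/-- key pointwise bound: b1 ≥ 2 (l - μ)². -/
lemma b1_ge_quadratic (ρ : ℝ) {l : ℝ} (hl : l ∈ Icc (0:ℝ) 1) :
    2 * (l - mu1 ρ)^2 ≤ b1 l ρ := by
  set c := mu1 ρ with hc
  have hc0 := mu1_pos ρ
  have hc1 := mu1_lt_one ρ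
  set g : ℝ → ℝ := fun l => b1 l ρ - 2 * (l - c)^2 with hg
  have hgc : g c = 0 := by simp [hg, hc, b1_mu1 ρ]
  have hgcont : Continuous g := (continuous_b1 ρ).sub (by continuity)
  have hderiv : ∀ y ∈ Ioo (0:ℝ) 1, HasDerivAt g
      (Real.log y - Real.log (1 - y) - ρ - 4 * (y - c)) y :=
    fun y hy => hasDerivAt_g ρ (ne_of_gt hy.1) (ne_of_lt hy.2)
  set G : ℝ → ℝ := fun y => Real.log y - Real.log (1 - y) - ρ - 4 * (y - c) with hGdef
  have hGd : ∀ y ∈ Ioo (0:ℝ) 1, HasDerivAt G (y⁻¹ + (1-y)⁻¹ - 4) y :=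
    fun y hy => hasDerivAt_G ρ c hy
  have hGmono : MonotoneOn G (Ioo 0 1) := by
    apply monotoneOn_of_deriv_nonneg (convex_Ioo 0 1)
      (fun y hy => (hGd y hy).differentiableAt.continuousAt.continuousWithinAt)
    · rw [interior_Ioo]
      exact fun y hy => (hGd y hy).differentiableAt.differentiableWithinAt
    · rw [interior_Ioo]
      intro y hy
      rw [(hGd y hy).deriv]
      have h1 : 0 < y := hy.1
      have h2 : 0 < 1 - y := by linarith [hy.2]
      have key : y⁻¹ + (1-y)⁻¹ - 4 = (1 - 2*y)^2 / (y * (1-y)) := by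
        field_simp; ring
      rw [key]; positivity
  have hGc : G c = 0 := by
    simp only [hGdef]
    rw [logit_at_mu1 ρ]; ring
  have hcmem : c ∈ Ioo (0:ℝ) 1 := ⟨hc0, hc1⟩
  have hanti : AntitoneOn g (Icc 0 c) := by
    apply antitoneOn_of_deriv_nonpos (convex_Icc 0 c) hgcont.continuousOn
    · rw [interior_Icc]
      exact fun y hy => (hderiv y ⟨hy.1, lt_trans hy.2 hc1⟩).differentiableAt.differentiableWithinAt
    · rw [interior_Icc]
      intro y hy
      have hy' : y ∈ Ioo (0:ℝ) 1 := ⟨hy.1, lt_trans hy.2 hc1⟩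
      rw [(hderiv y hy').deriv]
      have := hGmono hy' hcmem (le_of_lt hy.2)
      rw [hGc] at this
      exact this
  have hmono : MonotoneOn g (Icc c 1) := by
    apply monotoneOn_of_deriv_nonneg (convex_Icc c 1) hgcont.continuousOn
    · rw [interior_Icc]
      exact fun y hy => (hderiv y ⟨lt_trans hc0 hy.1, hy.2⟩).differentiableAt.differentiableWithinAt
    · rw [interior_Icc]
      intro y hy
      have hy' : y ∈ Ioo (0:ℝ) 1 := ⟨lt_trans hc0 hy.1, hy.2⟩
      rw [(hderiv y hy').deriv]
      have := hGmono hcmem hy' (le_of_lt hy.1)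
      rw [hGc] at this
      exact this
  have hfinal : (0:ℝ) ≤ g l := by
    rcases le_total l c with h | h
    · have := hanti ⟨hl.1, h⟩ ⟨hc0.le, le_refl c⟩ h
      rw [hgc] at this; exact this
    · have := hmono ⟨le_refl c, hc1.le⟩ ⟨h, hl.2⟩ h
      rw [hgc] at this; exact this
  simp only [hg] at hfinal
  linarith

def Asub (t ρ : ℝ) : Set ℝ := {l ∈ Set.Icc (0 : ℝ) 1 | b1 l ρ ≤ t}

lemma Asub_sub (t ρ : ℝ) : Asub t ρ ⊆ Icc 0 1 := fun l hl => hl.1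

lemma Asub_closed (t ρ : ℝ) : IsClosed (Asub t ρ) := by
  have : Asub t ρ = Icc 0 1 ∩ (fun l => b1 l ρ) ⁻¹' (Iic t) := by
    ext l; simp [Asub, Set.mem_setOf_eq, And.comm]
  rw [this]
  exact isClosed_Icc.inter (isClosed_Iic.preimage (continuous_b1 ρ))

lemma Asub_nonempty {t : ℝ} (ht : 0 ≤ t) (ρ : ℝ) : (Asub t ρ).Nonempty :=
  ⟨mu1 ρ, ⟨(mu1_pos ρ).le, (mu1_lt_one ρ).le⟩, by rw [b1_mu1]; exact ht⟩

lemma Asub_convex (t ρ : ℝ) : Convex ℝ (Asub t ρ) := (convexOn_b1 ρ).convex_le t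

lemma Asub_bddB (t ρ : ℝ) : BddBelow (Asub t ρ) :=
  (bddBelow_Icc (a := (1:ℝ)) (b := 0)).mono (Asub_sub t ρ)
lemma Asub_bddA (t ρ : ℝ) : BddAbove (Asub t ρ) :=
  (bddAbove_Icc (a := (0:ℝ)) (b := 1)).mono (Asub_sub t ρ)

lemma sInf_mem_Asub {t : ℝ} (ht : 0 ≤ t) (ρ : ℝ) : sInf (Asub t ρ) ∈ Asub t ρ :=
  (Asub_closed t ρ).csInf_mem (Asub_nonempty ht ρ) (Asub_bddB t ρ)
lemma sSup_mem_Asub {t : ℝ} (ht : 0 ≤ t) (ρ : ℝ) : sSup (Asub t ρ) ∈ Asub t ρ :=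
  (Asub_closed t ρ).csSup_mem (Asub_nonempty ht ρ) (Asub_bddA t ρ)

lemma Asub_eq_Icc {t : ℝ} (ht : 0 ≤ t) (ρ : ℝ) :
    Asub t ρ = Icc (sInf (Asub t ρ)) (sSup (Asub t ρ)) := by
  apply Subset.antisymm
  · exact fun l hl => ⟨csInf_le (Asub_bddB t ρ) hl, le_csSup (Asub_bddA t ρ) hl⟩
  · exact (Asub_convex t ρ).ordConnected.out (sInf_mem_Asub ht ρ) (sSup_mem_Asub ht ρ)

lemma D1_eq {t : ℝ} (ht : 0 ≤ t) (ρ : ℝ) :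
    D1 t ρ = sSup (Asub t ρ) - sInf (Asub t ρ) := by
  have h := Asub_eq_Icc ht ρ
  have hle : sInf (Asub t ρ) ≤ sSup (Asub t ρ) :=
    csInf_le_csSup (Asub_nonempty ht ρ) (Asub_bddB t ρ) (Asub_bddA t ρ)
  have hv : volume (Asub t ρ) = ENNReal.ofReal (sSup (Asub t ρ) - sInf (Asub t ρ)) := by
    conv_lhs => rw [h]
    rw [Real.volume_Icc]
  rw [D1, show {l ∈ Set.Icc (0 : ℝ) 1 | b1 l ρ ≤ t} = Asub t ρ from rfl, hv,
    ENNReal.toReal_ofReal (by linarith)]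

lemma D1_nonneg (t ρ : ℝ) : 0 ≤ D1 t ρ := ENNReal.toReal_nonneg

lemma D1_mono {a t : ℝ} (h : a ≤ t) (ρ : ℝ) : D1 a ρ ≤ D1 t ρ := by
  apply ENNReal.toReal_mono
  · exact ne_of_lt (lt_of_le_of_lt (measure_mono (fun l hl => hl.1))
      (by rw [Real.volume_Icc]; exact ENNReal.ofReal_lt_top))
  · exact measure_mono (fun l hl => ⟨hl.1, hl.2.trans h⟩)

lemma D1_le_sqrt {t : ℝ} (ht : 0 ≤ t) (ρ : ℝ) : D1 t ρ ≤ Real.sqrt (2*t) := by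
  have hsub : Asub t ρ ⊆ Icc (mu1 ρ - Real.sqrt (t/2)) (mu1 ρ + Real.sqrt (t/2)) := by
    intro l hl
    have hq := b1_ge_quadratic ρ hl.1
    have h2 : (l - mu1 ρ)^2 ≤ t/2 := by linarith [hl.2]
    have habs : |l - mu1 ρ| ≤ Real.sqrt (t/2) := by
      rw [← Real.sqrt_sq_eq_abs]; exact Real.sqrt_le_sqrt h2
    have h3 := abs_le.mp habs
    exact ⟨by linarith [h3.1], by linarith [h3.2]⟩
  calc D1 t ρ ≤ (volume (Icc (mu1 ρ - Real.sqrt (t/2)) (mu1 ρ + Real.sqrt (t/2)))).toReal := by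
        apply ENNReal.toReal_mono
        · rw [Real.volume_Icc]; exact ENNReal.ofReal_ne_top
        · exact measure_mono hsub
    _ = Real.sqrt (t/2) * 2 := by
        rw [Real.volume_Icc, ENNReal.toReal_ofReal (by linarith [Real.sqrt_nonneg (t/2)])]
        ring
    _ = Real.sqrt (2*t) := by
        rw [show 2*t = (t/2)*4 by ring, Real.sqrt_mul (by linarith) 4,
          show (4:ℝ) = 2^2 by norm_num, Real.sqrt_sq (by norm_num : (0:ℝ) ≤ 2)]

/-- three-point concavity of D1 in t -/
lemma D1_concave (ρ : ℝ) {a b θ : ℝ} (ha : 0 ≤ a) (hb : 0 ≤ b) (hθ0 : 0 ≤ θ) (hθ1 : θ ≤ 1) :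
    θ * D1 a ρ + (1-θ) * D1 b ρ ≤ D1 (θ*a + (1-θ)*b) ρ := by
  have hab : 0 ≤ θ*a + (1-θ)*b := by nlinarith
  have key : ∀ u ∈ Asub a ρ, ∀ v ∈ Asub b ρ, θ*u + (1-θ)*v ∈ Asub (θ*a + (1-θ)*b) ρ := by
    intro u hu v hv
    refine ⟨(convex_Icc (0:ℝ) 1) hu.1 hv.1 hθ0 (by linarith) (by ring), ?_⟩
    have := (convexOn_b1 ρ).2 hu.1 hv.1 hθ0 (by linarith : (0:ℝ) ≤ 1-θ) (by ring)
    simp only [smul_eq_mul] at this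
    exact this.trans (by nlinarith [hu.2, hv.2])
  rw [D1_eq ha ρ, D1_eq hb ρ, D1_eq hab ρ]
  have hsup := key _ (sSup_mem_Asub ha ρ) _ (sSup_mem_Asub hb ρ)
  have hinf := key _ (sInf_mem_Asub ha ρ) _ (sInf_mem_Asub hb ρ)
  have h1 : θ * sSup (Asub a ρ) + (1-θ) * sSup (Asub b ρ) ≤ sSup (Asub (θ*a+(1-θ)*b) ρ) :=
    le_csSup (Asub_bddA _ ρ) hsup
  have h2 : sInf (Asub (θ*a+(1-θ)*b) ρ) ≤ θ * sInf (Asub a ρ) + (1-θ) * sInf (Asub b ρ) :=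
    csInf_le (Asub_bddB _ ρ) hinf
  linarith

lemma slope_tendsto {d t ρ : ℝ} (hd : HasDerivAt (fun t' => D1 t' ρ) d t) :
    Tendsto (slope (fun t' => D1 t' ρ) t) (nhdsWithin t (Ioi t)) (nhds d) :=
  (hasDerivAt_iff_tendsto_slope.mp hd).mono_left
    (nhdsWithin_mono t (fun u hu => ne_of_gt hu))

lemma Dt_nonneg {d t ρ : ℝ} (hd : HasDerivAt (fun t' => D1 t' ρ) d t) : 0 ≤ d := by
  refine ge_of_tendsto (slope_tendsto hd) ?_
  filter_upwards [self_mem_nhdsWithin] with u hu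
  rw [slope_def_field]
  have : (0:ℝ) < u - t := by simp at hu; linarith
  apply div_nonneg _ this.le
  have := D1_mono (le_of_lt (by simpa using hu : t < u)) ρ
  linarith

lemma Dt_le {d t ρ : ℝ} (ht : 0 < t) (hd : HasDerivAt (fun t' => D1 t' ρ) d t) :
    d ≤ 2 * Real.sqrt (2*t) / t := by
  have key : d ≤ (D1 t ρ - D1 (t/2) ρ) / (t/2) := by
    refine le_of_tendsto (slope_tendsto hd) ?_
    filter_upwards [self_mem_nhdsWithin] with u hu
    have htu : t < u := by simpa using hu
    rw [slope_def_field]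
    set θ : ℝ := (u - t) / (u - t/2) with hθ
    have hden : 0 < u - t/2 := by linarith
    have hθ0 : 0 ≤ θ := div_nonneg (by linarith) hden.le
    have hθ1 : θ ≤ 1 := by
      rw [hθ, div_le_one hden]; linarith
    have hexp : θ * (u - t/2) = u - t := by
      rw [hθ]; exact div_mul_cancel₀ _ (ne_of_gt hden)
    have hexp2 : (1-θ) * (u - t/2) = t/2 := by linear_combination -hexp
    have hcomb : θ * (t/2) + (1-θ) * u = t := by linear_combination -hexp
    have hconc := D1_concave ρ (by linarith : (0:ℝ) ≤ t/2) (by linarith : (0:ℝ) ≤ u) hθ0 hθ1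
    rw [hcomb] at hconc
    have H := mul_le_mul_of_nonneg_right hconc hden.le
    have e3 : (θ * D1 (t/2) ρ + (1-θ) * D1 u ρ) * (u - t/2)
        = (u-t) * D1 (t/2) ρ + (t/2) * D1 u ρ := by
      linear_combination D1 (t/2) ρ * hexp + D1 u ρ * hexp2
    rw [e3] at H
    rw [div_le_div_iff₀ (by linarith) (by linarith)]
    nlinarith [H]
  have h2 : (D1 t ρ - D1 (t/2) ρ) / (t/2) ≤ Real.sqrt (2*t) / (t/2) := by
    rw [div_le_div_iff_of_pos_right (by linarith : (0:ℝ) < t/2)]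
    linarith [D1_nonneg (t/2) ρ, D1_le_sqrt (by linarith : (0:ℝ) ≤ t) ρ]
  have h3 : Real.sqrt (2*t) / (t/2) = 2 * Real.sqrt (2*t) / t := by
    field_simp
  linarith [key, h2, h3.le]

lemma continuous_mu1 : Continuous mu1 :=
  Real.continuous_exp.div (continuous_const.add Real.continuous_exp)
    (fun ρ => ne_of_gt (one_add_exp_pos ρ))

lemma hasDerivAt_mu1 (ρ : ℝ) : HasDerivAt mu1 (mu1 ρ * (1 - mu1 ρ)) ρ := by
  have h := (Real.hasDerivAt_exp ρ).div
    ((hasDerivAt_const ρ (1:ℝ)).add (Real.hasDerivAt_exp ρ))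
    (ne_of_gt (one_add_exp_pos ρ))
  refine h.congr_deriv ?_
  have hne := ne_of_gt (one_add_exp_pos ρ)
  rw [mu1, Pi.add_apply]
  field_simp
  ring

lemma l_mem_Ioo {s x : ℝ} (hs : 0 < s) (hs1 : s < 1) (hx : x = 0 ∨ x = 1) (ρ : ℝ) :
    (1-s) * mu1 ρ + s*x ∈ Ioo (0:ℝ) 1 := by
  have h0 := mu1_pos ρ
  have h1 := mu1_lt_one ρ
  rcases hx with h | h <;> subst h <;> constructor <;> nlinarith

lemma hasDerivAt_B1 {s x : ℝ} (hs : 0 < s) (hs1 : s < 1) (hx : x = 0 ∨ x = 1) (ρ : ℝ) :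
    HasDerivAt (fun r => B1 s r x)
      ((1-s) * (mu1 ρ * (1 - mu1 ρ)) *
        (Real.log ((1-s) * mu1 ρ + s*x) - Real.log (1 - ((1-s) * mu1 ρ + s*x)) - ρ)
        + (mu1 ρ - ((1-s) * mu1 ρ + s*x))) ρ := by
  set l := (1-s) * mu1 ρ + s*x with hl
  obtain ⟨hl0, hl1⟩ := l_mem_Ioo hs hs1 hx ρ
  set l' : ℝ := (1-s) * (mu1 ρ * (1 - mu1 ρ)) with hl'
  have hL : HasDerivAt (fun r => (1-s) * mu1 r + s*x) l' ρ := by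
    simpa [hl'] using (((hasDerivAt_mu1 ρ).const_mul (1-s)).add_const (s*x))
  have t1 : HasDerivAt (fun r => ((1-s) * mu1 r + s*x) * Real.log ((1-s) * mu1 r + s*x))
      ((Real.log l + 1) * l') ρ :=
    by have := (Real.hasDerivAt_mul_log (ne_of_gt hl0)).comp ρ hL; exact this
  have t2 : HasDerivAt (fun r => (1 - ((1-s) * mu1 r + s*x)) * Real.log (1 - ((1-s) * mu1 r + s*x)))
      ((Real.log (1-l) + 1) * (-l')) ρ := by
    have hc : HasDerivAt (fun r => 1 - ((1-s) * mu1 r + s*x)) (-l') ρ := by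
      simpa [Pi.sub_def] using (hasDerivAt_const ρ (1:ℝ)).sub hL
    exact (Real.hasDerivAt_mul_log (x := 1 - l) (by intro h; nlinarith)).comp ρ hc
  have t3 : HasDerivAt (fun r => ((1-s) * mu1 r + s*x) * r) (l' * ρ + l) ρ := by
    simpa [Pi.mul_def] using hL.mul (hasDerivAt_id ρ)
  have t4 : HasDerivAt (fun r => Real.log (1 + Real.exp r)) (mu1 ρ) ρ := by
    have := (Real.hasDerivAt_log (ne_of_gt (one_add_exp_pos ρ))).comp ρ
      ((hasDerivAt_const ρ (1:ℝ)).add (Real.hasDerivAt_exp ρ))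
    simpa [mu1, div_eq_inv_mul, Function.comp_def, Pi.add_def] using this
  have := ((t1.add t2).sub t3).add t4
  have heq : (Real.log l + 1) * l' + (Real.log (1-l) + 1) * (-l') - (l' * ρ + l) + mu1 ρ
      = (1-s) * (mu1 ρ * (1 - mu1 ρ)) * (Real.log l - Real.log (1-l) - ρ) + (mu1 ρ - l) := by
    rw [hl']; ring
  rw [heq] at this
  exact this

/-- for m = 1, the product D_t(B(s,ρ,x),ρ)·B_ρ(s,ρ,x) tends to 0 as
(s,ρ) → (0⁺,ρ̃); hence it extends continuously to s = 0 with value 0. -/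
theorem Dt_Brho_tendsto_zero (ρt : ℝ) (x : ℝ) (hx : x = 0 ∨ x = 1)
    (Dt : ℝ → ℝ → ℝ)
    (hDt : ∀ t : ℝ, 0 < t → ∀ ρ : ℝ, HasDerivAt (fun t' => D1 t' ρ) (Dt t ρ) t)
    (hDtc : ContinuousOn (fun q : ℝ × ℝ => Dt q.1 q.2)
      (Set.Ioi (0 : ℝ) ×ˢ (Set.univ : Set ℝ))) :
    Filter.Tendsto
      (fun q : ℝ × ℝ => Dt (B1 q.1 q.2 x) q.2 * deriv (fun r => B1 q.1 r x) q.2)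
      (nhdsWithin (0, ρt) (Set.Ioi (0 : ℝ) ×ˢ (Set.univ : Set ℝ)))
      (nhds 0) := by
  set F := nhdsWithin ((0:ℝ), ρt) (Set.Ioi (0 : ℝ) ×ˢ (Set.univ : Set ℝ)) with hF
  set c := mu1 ρt with hcdef
  have hc0 : 0 < c := mu1_pos ρt
  have hc1 : c < 1 := mu1_lt_one ρt
  -- basic filter limits
  have hid : Tendsto (fun q : ℝ × ℝ => q) F (nhds ((0:ℝ), ρt)) :=
    tendsto_id.mono_left nhdsWithin_le_nhds
  have hs_tend : Tendsto (fun q : ℝ × ℝ => q.1) F (nhds 0) :=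
    (continuous_fst.tendsto _).comp hid
  have hρ_tend : Tendsto (fun q : ℝ × ℝ => q.2) F (nhds ρt) :=
    (continuous_snd.tendsto _).comp hid
  have hμ_tend : Tendsto (fun q : ℝ × ℝ => mu1 q.2) F (nhds c) :=
    (continuous_mu1.tendsto _).comp hρ_tend
  have hs_pos : ∀ᶠ q : ℝ × ℝ in F, 0 < q.1 := by
    filter_upwards [self_mem_nhdsWithin] with q hq
    exact (mem_prod.mp hq).1
  have hs_lt1 : ∀ᶠ q : ℝ × ℝ in F, q.1 < 1 := hs_tend.eventually_lt_const one_pos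
  -- lower bound on |x - μ|
  set d0 : ℝ := min c (1-c) / 2 with hd0def
  have hd0 : 0 < d0 := by
    rw [hd0def]
    rcases le_total c (1-c) with h | h
    · rw [min_eq_left h]; linarith
    · rw [min_eq_right h]; linarith
  have hdist : ∀ᶠ q : ℝ × ℝ in F, d0 ≤ |x - mu1 q.2| := by
    have h1 : ∀ᶠ q : ℝ × ℝ in F, mu1 q.2 > d0 := by
      apply hμ_tend.eventually_const_lt
      rw [hd0def]
      rcases le_total c (1-c) with h | h
      · rw [min_eq_left h]; linarith
      · rw [min_eq_right h]; linarith
    have h2 : ∀ᶠ q : ℝ × ℝ in F, mu1 q.2 < 1 - d0 := by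
      apply hμ_tend.eventually_lt_const
      rw [hd0def]
      rcases le_total c (1-c) with h | h
      · rw [min_eq_left h]; linarith
      · rw [min_eq_right h]; linarith
    filter_upwards [h1, h2] with q hq1 hq2
    rcases hx with h | h <;> subst h
    · rw [abs_of_nonpos (by linarith [mu1_pos q.2])]; linarith
    · rw [abs_of_nonneg (by linarith [mu1_lt_one q.2])]; linarith
  -- the l function
  set l : ℝ × ℝ → ℝ := fun q => (1-q.1) * mu1 q.2 + q.1 * x with hldef
  have hl_sub : ∀ q : ℝ × ℝ, l q - mu1 q.2 = q.1 * (x - mu1 q.2) := by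
    intro q; rw [hldef]; ring
  have hl_Ioo : ∀ᶠ q : ℝ × ℝ in F, l q ∈ Ioo (0:ℝ) 1 := by
    filter_upwards [hs_pos, hs_lt1] with q h1 h2
    exact l_mem_Ioo h1 h2 hx q.2
  have hl_tend : Tendsto l F (nhds c) := by
    have : Tendsto l F (nhds ((1-0) * c + 0 * x)) := by
      exact (((tendsto_const_nhds.sub hs_tend).mul hμ_tend).add (hs_tend.mul tendsto_const_nhds))
    simpa using this
  -- lower bound for B1
  have hB_lb : ∀ᶠ q : ℝ × ℝ in F, 2 * q.1^2 * d0^2 ≤ B1 q.1 q.2 x ∧ 0 < B1 q.1 q.2 x := by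
    filter_upwards [hs_pos, hdist, hl_Ioo] with q hq hd hlq
    have hq1 : (l q) ∈ Icc (0:ℝ) 1 := ⟨hlq.1.le, hlq.2.le⟩
    have := b1_ge_quadratic q.2 hq1
    have hBeq : B1 q.1 q.2 x = b1 (l q) q.2 := rfl
    have hsq : (l q - mu1 q.2)^2 = q.1^2 * (x - mu1 q.2)^2 := by rw [hl_sub q]; ring
    have habs : d0^2 ≤ (x - mu1 q.2)^2 := by
      have := sq_le_sq' (by linarith [abs_nonneg (x - mu1 q.2), hd] : -(|x - mu1 q.2|) ≤ d0)
        (hd)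
      calc d0^2 ≤ |x - mu1 q.2|^2 := by nlinarith [abs_nonneg (x - mu1 q.2)]
        _ = (x - mu1 q.2)^2 := sq_abs _
    constructor
    · rw [hBeq]
      calc 2 * q.1^2 * d0^2 ≤ 2 * q.1^2 * (x - mu1 q.2)^2 := by nlinarith [sq_nonneg q.1]
        _ = 2 * (l q - mu1 q.2)^2 := by rw [hsq]; ring
        _ ≤ b1 (l q) q.2 := this
    · have : (0:ℝ) < 2 * q.1^2 * d0^2 := by positivity
      rw [hBeq]
      calc (0:ℝ) < 2 * q.1^2 * d0^2 := this
        _ ≤ 2 * (l q - mu1 q.2)^2 := by nlinarith [sq_nonneg q.1]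
        _ ≤ b1 (l q) q.2 := b1_ge_quadratic q.2 hq1
  -- bound on Dt
  have hDt_bound : ∀ᶠ q : ℝ × ℝ in F,
      0 ≤ Dt (B1 q.1 q.2 x) q.2 ∧ Dt (B1 q.1 q.2 x) q.2 ≤ 2 / (q.1 * d0) := by
    filter_upwards [hB_lb, hs_pos] with q hB hq
    obtain ⟨hlb, hpos⟩ := hB
    have hder := hDt _ hpos q.2
    refine ⟨Dt_nonneg hder, ?_⟩
    have h1 := Dt_le hpos hder
    set t := B1 q.1 q.2 x with ht
    have hsd : 0 < q.1 * d0 := mul_pos hq hd0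
    have h2 : q.1 * d0 ≤ Real.sqrt (t/2) := by
      rw [show q.1 * d0 = Real.sqrt ((q.1*d0)^2) from (Real.sqrt_sq hsd.le).symm]
      apply Real.sqrt_le_sqrt
      nlinarith
    have h3 : Real.sqrt (2*t) * Real.sqrt (t/2) = t := by
      rw [← Real.sqrt_mul (by linarith) (t/2), show 2*t*(t/2) = t^2 by ring,
        Real.sqrt_sq hpos.le]
    have h4 : 2 * Real.sqrt (2*t) / t ≤ 2 / (q.1 * d0) := by
      rw [div_le_div_iff₀ hpos hsd]
      have h5 : Real.sqrt (2*t) * (q.1*d0) ≤ Real.sqrt (2*t) * Real.sqrt (t/2) :=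
        mul_le_mul_of_nonneg_left h2 (Real.sqrt_nonneg _)
      rw [h3] at h5
      nlinarith
    linarith
  -- strict differentiability of the logit function
  set f : ℝ → ℝ := fun u => Real.log u - Real.log (1-u) with hfdef
  set fc' : ℝ := c⁻¹ + (1-c)⁻¹ with hfc'
  have hstrict : HasStrictDerivAt f fc' c := by
    have h1 : HasStrictDerivAt Real.log c⁻¹ c := Real.hasStrictDerivAt_log (ne_of_gt hc0)
    have h2 : HasStrictDerivAt (fun u : ℝ => Real.log (1-u)) (-(1-c)⁻¹) c := by
      have := (Real.hasStrictDerivAt_log (x := 1-c) (by intro h; nlinarith)).comp c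
        ((hasStrictDerivAt_const c (1:ℝ)).sub (hasStrictDerivAt_id c))
      simpa [Function.comp_def, Pi.sub_def] using this
    have := h1.sub h2
    exact this.congr_deriv (by ring)
  have hlito : (fun p : ℝ × ℝ => f p.1 - f p.2 - fc' * (p.1 - p.2))
      =o[nhds (c, c)] fun p : ℝ × ℝ => p.1 - p.2 := by
    have := hstrict.isLittleO
    apply this.congr' ?_ (EventuallyEq.refl _ _)
    filter_upwards with p
    simp [ContinuousLinearMap.smulRight_apply]
    ring
  have hφ : Tendsto (fun q : ℝ × ℝ => (l q, mu1 q.2)) F (nhds (c, c)) :=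
    hl_tend.prodMk_nhds hμ_tend
  set E : ℝ × ℝ → ℝ := fun q => f (l q) - f (mu1 q.2) - fc' * (l q - mu1 q.2) with hEdef
  have hE1 : E =o[F] (fun q => l q - mu1 q.2) := hlito.comp_tendsto hφ
  have hbig : (fun q : ℝ × ℝ => l q - mu1 q.2) =O[F] (fun q => q.1) := by
    apply Asymptotics.IsBigO.of_bound 1
    filter_upwards with q
    rw [hl_sub q]
    have h0 := mu1_pos q.2
    have h1 := mu1_lt_one q.2
    have : |x - mu1 q.2| ≤ 1 := by
      rcases hx with h | h <;> subst h <;> rw [abs_le] <;> constructor <;> linarith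
    rw [Real.norm_eq_abs, Real.norm_eq_abs, abs_mul, one_mul]
    nlinarith [abs_nonneg (q.1)]
  have hEo : E =o[F] (fun q : ℝ × ℝ => q.1) := hE1.trans_isBigO hbig
  have hEdiv : Tendsto (fun q : ℝ × ℝ => E q / q.1) F (nhds 0) := hEo.tendsto_div_nhds_zero
  -- the two pieces
  set m : ℝ → ℝ := fun ρ => mu1 ρ * (1 - mu1 ρ) with hmdef
  have hm_tend : Tendsto (fun q : ℝ × ℝ => m q.2) F (nhds (c * (1-c))) :=
    hμ_tend.mul (tendsto_const_nhds.sub hμ_tend)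
  set A1 : ℝ × ℝ → ℝ := fun q => ((1-q.1) * m q.2 * fc' - 1) * (x - mu1 q.2) with hA1def
  set A2 : ℝ × ℝ → ℝ := fun q => (1-q.1) * m q.2 * (E q / q.1) with hA2def
  have hz : (1-(0:ℝ)) * (c*(1-c)) * fc' - 1 = 0 := by
    have hne1 : c ≠ 0 := ne_of_gt hc0
    have hne2 : (1:ℝ) - c ≠ 0 := ne_of_gt (by linarith)
    rw [hfc']
    field_simp
    ring
  have hA1 : Tendsto A1 F (nhds 0) := by
    have h1 : Tendsto (fun q : ℝ × ℝ => (1-q.1) * m q.2 * fc' - 1) F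
        (nhds ((1-(0:ℝ)) * (c*(1-c)) * fc' - 1)) :=
      (((tendsto_const_nhds.sub hs_tend).mul hm_tend).mul tendsto_const_nhds).sub
        tendsto_const_nhds
    rw [hz] at h1
    have := h1.mul (tendsto_const_nhds.sub hμ_tend : Tendsto (fun q : ℝ × ℝ => x - mu1 q.2) F _)
    simpa using this
  have hA2 : Tendsto A2 F (nhds 0) := by
    have h1 : Tendsto (fun q : ℝ × ℝ => (1-q.1) * m q.2) F (nhds ((1-(0:ℝ)) * (c*(1-c)))) :=
      (tendsto_const_nhds.sub hs_tend).mul hm_tend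
    have := h1.mul hEdiv
    simpa using this
  -- identification of the derivative
  have hkey : ∀ᶠ q : ℝ × ℝ in F,
      deriv (fun r => B1 q.1 r x) q.2 = (A1 q + A2 q) * q.1 := by
    filter_upwards [hs_pos, hs_lt1] with q h1 h2
    have hder := (hasDerivAt_B1 h1 h2 hx q.2).deriv
    rw [hder]
    have hfμ : f (mu1 q.2) = q.2 := logit_at_mu1 q.2
    have hfl : Real.log ((1-q.1) * mu1 q.2 + q.1*x) - Real.log (1 - ((1-q.1) * mu1 q.2 + q.1*x))
        - q.2 = fc' * (q.1 * (x - mu1 q.2)) + E q := by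
      have : f (l q) - q.2 = fc' * (l q - mu1 q.2) + E q := by
        rw [hEdef]; dsimp only; rw [hfμ]; ring
      rw [hl_sub q] at this
      simpa [hfdef, hldef] using this
    have hlq : (1-q.1) * mu1 q.2 + q.1*x = l q := rfl
    rw [hlq, hfl]
    have hEs : E q / q.1 * q.1 = E q := div_mul_cancel₀ _ (ne_of_gt h1)
    rw [hA1def, hA2def]
    dsimp only
    have hμl : mu1 q.2 - l q = -(q.1 * (x - mu1 q.2)) := by
      have := hl_sub q; linarith
    rw [hμl, hmdef]
    dsimp only
    linear_combination (-((1-q.1) * (mu1 q.2 * (1 - mu1 q.2)))) * hEs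
  -- final squeeze
  apply squeeze_zero_norm' (a := fun q : ℝ × ℝ => (2/d0) * |A1 q + A2 q|)
  · filter_upwards [hkey, hDt_bound, hs_pos] with q hk hD hq
    obtain ⟨hDnn, hDle⟩ := hD
    rw [hk, Real.norm_eq_abs, abs_mul, abs_mul, abs_of_nonneg hDnn, abs_of_nonneg hq.le]
    have h1 : Dt (B1 q.1 q.2 x) q.2 * (|A1 q + A2 q| * q.1)
        ≤ (2/(q.1*d0)) * (|A1 q + A2 q| * q.1) :=
      mul_le_mul_of_nonneg_right hDle (by positivity)
    have h2 : (2/(q.1*d0)) * (|A1 q + A2 q| * q.1) = (2/d0) * |A1 q + A2 q| := by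
      field_simp
    calc Dt (B1 q.1 q.2 x) q.2 * (|A1 q + A2 q| * q.1)
        ≤ (2/(q.1*d0)) * (|A1 q + A2 q| * q.1) := h1
      _ = (2/d0) * |A1 q + A2 q| := h2
  · have : Tendsto (fun q : ℝ × ℝ => A1 q + A2 q) F (nhds 0) := by
      simpa using hA1.add hA2
    have habs : Tendsto (fun q : ℝ × ℝ => |A1 q + A2 q|) F (nhds 0) := by
      simpa using this.abs
    simpa using habs.const_mul (2/d0)
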